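/- arXiv:1510.06136 — 7 statements merged into one kernel-verified Lean document; each statement's English description precedes it below -/
import Mathlib

section
/- For every real α and every a ≠ 0, the triple (a, 0, 0) (structure constants of a metric on the Heisenberg group H(3)) is a fixed point of the RG-2 bracket flow system if and only if 3αa² = 8; in particular such a steady soliton exists exactly when α > 0, with a = ±√(8/(3α)). -/
noncomputable section

/-- `Q₁ = (a₂−a₃)² − 3a₁² + 2a₁a₂ + 2a₁a₃`. -/
def Q1 (a1 a2 a3 : ℝ) : ℝ := (a2 - a3) ^ 2 - 3 * a1 ^ 2 + 2 * a1 * a2 + 2 * a1 * a3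

/-- `Q₂ = (a₁−a₃)² − 3a₂² + 2a₂a₁ + 2a₂a₃`. -/
def Q2 (a1 a2 a3 : ℝ) : ℝ := (a1 - a3) ^ 2 - 3 * a2 ^ 2 + 2 * a2 * a1 + 2 * a2 * a3

/-- `Q₃ = (a₁−a₂)² − 3a₃² + 2a₃a₁ + 2a₃a₂`. -/
def Q3 (a1 a2 a3 : ℝ) : ℝ := (a1 - a2) ^ 2 - 3 * a3 ^ 2 + 2 * a3 * a1 + 2 * a3 * a2

/-- Right-hand side of the RG-2 bracket flow for `a₁`. -/
def F1 (α a1 a2 a3 : ℝ) : ℝ := (a1 / 2) * Q1 a1 a2 a3 * (1 + (α / 8) * Q1 a1 a2 a3)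

/-- Right-hand side of the RG-2 bracket flow for `a₂`. -/
def F2 (α a1 a2 a3 : ℝ) : ℝ := (a2 / 2) * Q2 a1 a2 a3 * (1 + (α / 8) * Q2 a1 a2 a3)

/-- Right-hand side of the RG-2 bracket flow for `a₃`. -/
def F3 (α a1 a2 a3 : ℝ) : ℝ := (a3 / 2) * Q3 a1 a2 a3 * (1 + (α / 8) * Q3 a1 a2 a3)

/-- A triple of structure constants is a fixed point of the RG-2 bracket flow
(a steady algebraic soliton of the two-loop renormalization group flow). -/
def IsFixedPoint (α a1 a2 a3 : ℝ) : Prop :=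
  F1 α a1 a2 a3 = 0 ∧ F2 α a1 a2 a3 = 0 ∧ F3 α a1 a2 a3 = 0

lemma key (α a : ℝ) (ha : a ≠ 0) : IsFixedPoint α a 0 0 ↔ 3 * α * a ^ 2 = 8 := by
  have hF2 : F2 α a 0 0 = 0 := by simp [F2]
  have hF3 : F3 α a 0 0 = 0 := by simp [F3]
  constructor
  · rintro ⟨h1, -, -⟩
    have h1' : F1 α a 0 0 = (a / 2) * (-3 * a ^ 2) * ((8 - 3 * α * a ^ 2) / 8) := by
      unfold F1 Q1; ring
    rw [h1'] at h1
    rcases mul_eq_zero.mp h1 with h | h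
    · rcases mul_eq_zero.mp h with h | h
      · exact absurd h (by positivity)
      · nlinarith [sq_abs a, abs_pos.mpr ha]
    · linarith [(div_eq_zero_iff.mp h).resolve_right (by norm_num)]
  · intro h
    refine ⟨?_, hF2, hF3⟩
    have h1' : F1 α a 0 0 = (a / 2) * (-3 * a ^ 2) * ((8 - 3 * α * a ^ 2) / 8) := by
      unfold F1 Q1; ring
    rw [h1', h]; ring

/-- for every `α` and `a ≠ 0`, the triple `(a,0,0)` (Heisenberg group `H(3)`)
is a fixed point of the RG-2 bracket flow iff `3αa² = 8`; in particular such a steady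
soliton exists exactly when `α > 0`, with `a = ±√(8/(3α))`. -/
theorem stmt3 (α : ℝ) :
    (∀ a : ℝ, a ≠ 0 → (IsFixedPoint α a 0 0 ↔ 3 * α * a ^ 2 = 8)) ∧
    ((∃ a : ℝ, a ≠ 0 ∧ IsFixedPoint α a 0 0) ↔ 0 < α) ∧
    (0 < α → ∀ a : ℝ, a ≠ 0 →
      (IsFixedPoint α a 0 0 ↔
        a = Real.sqrt (8 / (3 * α)) ∨ a = -Real.sqrt (8 / (3 * α)))) := by
  refine ⟨fun a ha => key α a ha, ?_, ?_⟩
  · constructor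
    · rintro ⟨a, ha, hfp⟩
      have h := (key α a ha).mp hfp
      nlinarith [sq_nonneg a, sq_abs a, abs_pos.mpr ha]
    · intro hα
      refine ⟨Real.sqrt (8 / (3 * α)), ?_, ?_⟩
      · exact ne_of_gt (Real.sqrt_pos.mpr (by positivity))
      · rw [key α _ (ne_of_gt (Real.sqrt_pos.mpr (by positivity)))]
        rw [Real.sq_sqrt (by positivity : (0:ℝ) ≤ 8 / (3 * α))]
        field_simp
  · intro hα a ha
    rw [key α a ha]
    have h8 : (0:ℝ) < 8 / (3 * α) := by positivity
    constructor
    · intro h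
      have ha2 : a ^ 2 = 8 / (3 * α) := by field_simp; linarith
      have hs : Real.sqrt (8 / (3 * α)) ^ 2 = 8 / (3 * α) := Real.sq_sqrt h8.le
      have : (a - Real.sqrt (8 / (3 * α))) * (a + Real.sqrt (8 / (3 * α))) = 0 := by
        nlinarith
      rcases mul_eq_zero.mp this with h' | h'
      · left; linarith
      · right; linarith
    · rintro (rfl | rfl)
      · rw [Real.sq_sqrt h8.le]; field_simp
      · rw [neg_sq, Real.sq_sqrt h8.le]; field_simp
end
end

section
/- For every α > 0, the triple (a₁,a₂,a₃) = (−3/(2√α), 0, 1/(2√α)) (structure constants of a metric on E(1,1)) is a fixed point of the RG-2 bracket flow system, i.e. F₁ = F₂ = F₃ = 0 at this triple; explicitly, Q₁ = −8/α and Q₃ = 0 there. -/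
noncomputable section

/-- for every `α > 0`, the triple `(−3/(2√α), 0, 1/(2√α))` on `E(1,1)` is a
fixed point of the RG-2 bracket flow; explicitly `Q₁ = −8/α` and `Q₃ = 0` there. -/
theorem stmt9 (α : ℝ) (hα : 0 < α) :
    IsFixedPoint α (-3 / (2 * Real.sqrt α)) 0 (1 / (2 * Real.sqrt α)) ∧
    Q1 (-3 / (2 * Real.sqrt α)) 0 (1 / (2 * Real.sqrt α)) = -8 / α ∧
    Q3 (-3 / (2 * Real.sqrt α)) 0 (1 / (2 * Real.sqrt α)) = 0 := by
  have hs : Real.sqrt α ^ 2 = α := Real.sq_sqrt hα.le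
  have hs0 : Real.sqrt α ≠ 0 := by positivity
  have hα0 : α ≠ 0 := hα.ne'
  have hQ1 : Q1 (-3 / (2 * Real.sqrt α)) 0 (1 / (2 * Real.sqrt α)) = -8 / α := by
    simp only [Q1]
    field_simp
    nlinarith [hs]
  have hQ3 : Q3 (-3 / (2 * Real.sqrt α)) 0 (1 / (2 * Real.sqrt α)) = 0 := by
    simp only [Q3]
    field_simp
    nlinarith [hs]
  refine ⟨⟨?_, ?_, ?_⟩, hQ1, hQ3⟩
  · simp only [F1, hQ1]; field_simp; ring
  · simp [F2]
  · simp only [F3]; rw [hQ3]; ring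

end
end

section
/- For every α < 0, the triple (a₁,a₂,a₃) = (3/√(−2α), 3/√(−2α), 4/√(−2α)) (structure constants of a metric on SU(2)) is a fixed point of the RG-2 bracket flow system, i.e. F₁ = F₂ = F₃ = 0 at this triple; explicitly, Q₁ = Q₂ = −8/α and Q₃ = 0 there. -/
noncomputable section

/-- for every `α < 0`, the triple `(3/√(−2α), 3/√(−2α), 4/√(−2α))` on
`SU(2)` is a fixed point of the RG-2 bracket flow; explicitly `Q₁ = Q₂ = −8/α` and
`Q₃ = 0` there. -/
theorem stmt11 (α : ℝ) (hα : α < 0) :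
    IsFixedPoint α (3 / Real.sqrt (-2 * α)) (3 / Real.sqrt (-2 * α))
      (4 / Real.sqrt (-2 * α)) ∧
    Q1 (3 / Real.sqrt (-2 * α)) (3 / Real.sqrt (-2 * α)) (4 / Real.sqrt (-2 * α))
      = -8 / α ∧
    Q2 (3 / Real.sqrt (-2 * α)) (3 / Real.sqrt (-2 * α)) (4 / Real.sqrt (-2 * α))
      = -8 / α ∧
    Q3 (3 / Real.sqrt (-2 * α)) (3 / Real.sqrt (-2 * α)) (4 / Real.sqrt (-2 * α))
      = 0 := by
  have hpos : (0:ℝ) < -2 * α := by linarith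
  set s := Real.sqrt (-2 * α) with hsdef
  have hs : s ^ 2 = -2 * α := Real.sq_sqrt hpos.le
  have hsne : s ≠ 0 := by positivity
  have hαne : α ≠ 0 := ne_of_lt hα
  have hQ1 : Q1 (3 / s) (3 / s) (4 / s) = -8 / α := by
    unfold Q1; field_simp; linear_combination 8 * hs
  have hQ2 : Q2 (3 / s) (3 / s) (4 / s) = -8 / α := by
    unfold Q2; field_simp; linear_combination 8 * hs
  have hQ3 : Q3 (3 / s) (3 / s) (4 / s) = 0 := by
    unfold Q3; field_simp; nlinarith [hs]
  refine ⟨⟨?_, ?_, ?_⟩, hQ1, hQ2, hQ3⟩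
  · unfold F1; rw [hQ1]; field_simp; ring
  · unfold F2; rw [hQ2]; field_simp; ring
  · unfold F3; rw [hQ3]; ring
end
end

section
/- Classification of steady solitons of the form (a, 0, c·a): for every real α, every a ≠ 0 and every c ∈ ℝ, the triple (a, 0, c·a) is a fixed point of the RG-2 bracket flow system if and only if c = 1, or (c = 0 and 3αa² = 8), or (c = −1 and αa² = 2), or (c = −3 and 4αa² = 1), or (c = −1/3 and 4αa² = 9). -/
noncomputable section

/-- classification of RG-2 steady solitons of the form `(a, 0, c·a)` with
`a ≠ 0`. -/
theorem stmt13 (α a c : ℝ) (ha : a ≠ 0) :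
    IsFixedPoint α a 0 (c * a) ↔
      c = 1 ∨ (c = 0 ∧ 3 * α * a ^ 2 = 8) ∨ (c = -1 ∧ α * a ^ 2 = 2) ∨
      (c = -3 ∧ 4 * α * a ^ 2 = 1) ∨ (c = -(1 / 3) ∧ 4 * α * a ^ 2 = 9) := by
  have ha3 : a ^ 3 ≠ 0 := pow_ne_zero _ ha
  have ha16 : a ^ 3 / 16 ≠ 0 := div_ne_zero ha3 (by norm_num)
  have h1 : F1 α a 0 (c * a)
      = (a ^ 3 / 16) * ((c ^ 2 + 2 * c - 3) * (8 + (α * a ^ 2) * (c ^ 2 + 2 * c - 3))) := by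
    simp only [F1, Q1]; ring
  have h3 : F3 α a 0 (c * a)
      = (a ^ 3 / 16) * (c * ((1 + 2 * c - 3 * c ^ 2) *
          (8 + (α * a ^ 2) * (1 + 2 * c - 3 * c ^ 2)))) := by
    simp only [F3, Q3]; ring
  have h2 : F2 α a 0 (c * a) = 0 := by simp [F2]
  constructor
  · rintro ⟨e1, -, e3⟩
    rw [h1, mul_eq_zero] at e1
    rw [h3, mul_eq_zero] at e3
    have e1' : (c ^ 2 + 2 * c - 3) * (8 + (α * a ^ 2) * (c ^ 2 + 2 * c - 3)) = 0 :=
      e1.resolve_left ha16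
    have e3' : c * ((1 + 2 * c - 3 * c ^ 2) * (8 + (α * a ^ 2) * (1 + 2 * c - 3 * c ^ 2))) = 0 :=
      e3.resolve_left ha16
    rcases mul_eq_zero.mp e1' with hq | ht
    · have hfac : (c - 1) * (c + 3) = 0 := by linear_combination hq
      rcases mul_eq_zero.mp hfac with h | h
      · exact Or.inl (by linarith)
      · have hc : c = -3 := by linarith
        subst hc
        refine Or.inr (Or.inr (Or.inr (Or.inl ⟨rfl, ?_⟩)))
        linear_combination (-1 / 768) * e3'
    · rcases mul_eq_zero.mp e3' with hc0 | e3''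
      · subst hc0
        refine Or.inr (Or.inl ⟨rfl, ?_⟩)
        linear_combination -ht
      · rcases mul_eq_zero.mp e3'' with hq2 | ht2
        · have hfac : (c - 1) * (3 * c + 1) = 0 := by linear_combination -hq2
          rcases mul_eq_zero.mp hfac with h | h
          · exact Or.inl (by linarith)
          · have hc : c = -(1 / 3) := by linarith
            subst hc
            refine Or.inr (Or.inr (Or.inr (Or.inr ⟨rfl, ?_⟩)))
            linear_combination (-9 / 8) * ht
        · have hzero : (α * a ^ 2) * (4 * c ^ 2 - 4) = 0 := by linear_combination ht - ht2
          rcases mul_eq_zero.mp hzero with ht0 | hc2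
          · exact absurd (by linear_combination ht - (c ^ 2 + 2 * c - 3) * ht0 : (8 : ℝ) = 0)
              (by norm_num)
          · have hfac : (c - 1) * (c + 1) = 0 := by linear_combination (1 / 4) * hc2
            rcases mul_eq_zero.mp hfac with h | h
            · exact Or.inl (by linarith)
            · have hc : c = -1 := by linarith
              subst hc
              refine Or.inr (Or.inr (Or.inl ⟨rfl, ?_⟩))
              linear_combination (-1 / 4) * ht
  · rintro (hc | ⟨hc, hcond⟩ | ⟨hc, hcond⟩ | ⟨hc, hcond⟩ | ⟨hc, hcond⟩) <;> subst hc <;>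
      refine ⟨?_, h2, ?_⟩ <;> (first | rw [h1] | rw [h3])
    · ring
    · ring
    · linear_combination (3 * a ^ 3 / 16) * hcond
    · ring
    · linear_combination a ^ 3 * hcond
    · linear_combination (-a ^ 3) * hcond
    · ring
    · linear_combination (-48 * a ^ 3) * hcond
    · linear_combination (16 * a ^ 3 / 81) * hcond
    · ring
end
end

section
/- Classification of steady solitons of the form (a, a, c·a): for every real α, every a ≠ 0 and every c ∈ ℝ, the triple (a, a, c·a) is a fixed point of the RG-2 bracket flow system if and only if c = 0, or (c = 1 and αa² = −8), or (c = 4/3 and 2αa² = −9). -/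
noncomputable section

/-- classification of RG-2 steady solitons of the form `(a, a, c·a)` with
`a ≠ 0`. -/
theorem stmt14 (α a c : ℝ) (ha : a ≠ 0) :
    IsFixedPoint α a a (c * a) ↔
      c = 0 ∨ (c = 1 ∧ α * a ^ 2 = -8) ∨ (c = 4 / 3 ∧ 2 * α * a ^ 2 = -9) := by
  simp only [IsFixedPoint, F1, F2, F3, Q1, Q2, Q3]
  constructor
  · rintro ⟨h1, -, h3⟩
    by_cases hc : c = 0
    · exact Or.inl hc
    right
    -- From h1: 1 + (α/8) a²c² = 0, i.e. α a² c² = -8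
    have hA : α * a ^ 2 * c ^ 2 = -8 := by
      have h1' : (a / 2 * (a ^ 2 * c ^ 2)) * (1 + α / 8 * (a ^ 2 * c ^ 2)) = 0 := by
        linear_combination h1
      rcases mul_eq_zero.1 h1' with h | h
      · exfalso
        rcases mul_eq_zero.1 h with h' | h'
        · exact ha (by linarith)
        · rcases mul_eq_zero.1 h' with h'' | h''
          · exact ha (by simpa [pow_eq_zero_iff] using h'')
          · exact hc (by simpa [pow_eq_zero_iff] using h'')
      · linear_combination 8 * h
    have haa : α * a ^ 2 ≠ 0 := by
      intro h0
      rw [h0] at hA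
      norm_num at hA
    have h3' : (c * a / 2 * (a ^ 2 * (4 * c - 3 * c ^ 2))) *
        (1 + α / 8 * (a ^ 2 * (4 * c - 3 * c ^ 2))) = 0 := by
      linear_combination h3
    rcases mul_eq_zero.1 h3' with h | h
    · -- c(4-3c) = 0 hence c = 4/3
      have hc43 : c = 4 / 3 := by
        have : c * a * (a ^ 2 * (4 * c - 3 * c ^ 2)) = 0 := by linarith
        rcases mul_eq_zero.1 this with h' | h'
        · rcases mul_eq_zero.1 h' with h'' | h''
          · exact absurd h'' hc
          · exact absurd h'' ha
        · rcases mul_eq_zero.1 h' with h'' | h''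
          · exact absurd (by simpa [pow_eq_zero_iff] using h'') ha
          · -- 4c - 3c² = 0, c ≠ 0
            have : c * (4 - 3 * c) = 0 := by linarith
            rcases mul_eq_zero.1 this with h3c | h3c
            · exact absurd h3c hc
            · linarith
      right
      refine ⟨hc43, ?_⟩
      rw [hc43] at hA
      linear_combination (9/8) * hA
    · -- α a² c (4-3c) = -8
      have hB : α * a ^ 2 * (c * (4 - 3 * c)) = -8 := by linear_combination 8 * h
      have hcc : c ^ 2 = c * (4 - 3 * c) := by
        have : α * a ^ 2 * (c ^ 2 - c * (4 - 3 * c)) = 0 := by linarith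
        have := (mul_eq_zero.1 this).resolve_left haa
        linarith
      have hc1 : c = 1 := by
        have h4 : 4 * c * (c - 1) = 0 := by linear_combination hcc
        rcases mul_eq_zero.1 h4 with h' | h'
        · rcases mul_eq_zero.1 h' with h'' | h''
          · norm_num at h''
          · exact absurd h'' hc
        · linarith
      left
      refine ⟨hc1, ?_⟩
      rw [hc1] at hA
      linear_combination hA
  · rintro (rfl | ⟨rfl, hA⟩ | ⟨rfl, hA⟩)
    · exact ⟨by ring, by ring, by ring⟩
    · exact ⟨by linear_combination (a^3/16) * hA, by linear_combination (a^3/16) * hA,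
        by linear_combination (a^3/16) * hA⟩
    · exact ⟨by linear_combination (8*a^3/81) * hA, by linear_combination (8*a^3/81) * hA,
        by ring⟩
end
end

section
/- For every β ≠ 0 with 1 + 1/β ≥ 0, the four points (1, 1 + √(1+1/β)), (1, 1 − √(1+1/β)), (1 + √(1+1/β), 1) and (1 − √(1+1/β), 1) are fixed points of the planar system (7); moreover, for every β ≠ 0 the point (½(1 − 1/β), ½(1 − 1/β)) is a fixed point of system (7). -/
noncomputable section

/-- Right-hand side of system (7) for `m₂`. -/
def G2 (β m2 m3 : ℝ) : ℝ :=
  m2 * (1 - m2) * (1 + m2 - m3) * (1 - β * (1 + m3 - m2) * (1 - m2 - m3))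

/-- Right-hand side of system (7) for `m₃`. -/
def G3 (β m2 m3 : ℝ) : ℝ :=
  m3 * (1 - m3) * (1 + m3 - m2) * (1 - β * (1 + m2 - m3) * (1 - m2 - m3))

/-- A point `(m₂, m₃)` is a fixed point of the planar system (7). -/
def IsFixedPoint7 (β m2 m3 : ℝ) : Prop := G2 β m2 m3 = 0 ∧ G3 β m2 m3 = 0

/-- for every `β ≠ 0` with `1 + 1/β ≥ 0`, the points `(1, 1 ± √(1+1/β))`
and `(1 ± √(1+1/β), 1)` are fixed points of system (7); moreover for every `β ≠ 0` the
point `(½(1−1/β), ½(1−1/β))` is a fixed point of system (7). -/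
theorem stmt18 (β : ℝ) (hβ : β ≠ 0) :
    (1 + 1 / β ≥ 0 →
      IsFixedPoint7 β 1 (1 + Real.sqrt (1 + 1 / β)) ∧
      IsFixedPoint7 β 1 (1 - Real.sqrt (1 + 1 / β)) ∧
      IsFixedPoint7 β (1 + Real.sqrt (1 + 1 / β)) 1 ∧
      IsFixedPoint7 β (1 - Real.sqrt (1 + 1 / β)) 1) ∧
    IsFixedPoint7 β ((1 - 1 / β) / 2) ((1 - 1 / β) / 2) := by
  have hβ' : β * (1 / β) = 1 := by field_simp
  constructor
  · intro h
    have hs : Real.sqrt (1 + 1 / β) ^ 2 = 1 + 1 / β := Real.sq_sqrt h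
    set s := Real.sqrt (1 + 1 / β) with hsdef
    refine ⟨⟨by simp only [G2]; ring, ?_⟩, ⟨by simp only [G2]; ring, ?_⟩,
            ⟨?_, by simp only [G3]; ring⟩, ⟨?_, by simp only [G3]; ring⟩⟩ <;>
      simp only [G2, G3]
    · linear_combination ((1+s)*(1-(1+s))*(1+(1+s)-1) * (-β)) * hs
        - ((1+s)*(1-(1+s))*(1+(1+s)-1)) * hβ'
    · linear_combination ((1-s)*(1-(1-s))*(1+(1-s)-1) * (-β)) * hs
        - ((1-s)*(1-(1-s))*(1+(1-s)-1)) * hβ'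
    · linear_combination ((1+s)*(1-(1+s))*(1+(1+s)-1) * (-β)) * hs
        - ((1+s)*(1-(1+s))*(1+(1+s)-1)) * hβ'
    · linear_combination ((1-s)*(1-(1-s))*(1+(1-s)-1) * (-β)) * hs
        - ((1-s)*(1-(1-s))*(1+(1-s)-1)) * hβ'
  · constructor <;> simp only [G2, G3] <;>
      linear_combination (-(((1 - 1/β)/2) * (1 - (1 - 1/β)/2))) * hβ'
end
end

section
/- Completeness of the fixed-point list for system (7): for every β > 0, a point (m₂,m₃) ∈ ℝ² is a fixed point of system (7) if and only if it is one of the following: (0,0); (0,1); (0,−1); (1,0); (−1,0); (1,1); (0, 1 ± √(1/β)); (1 ± √(1/β), 0); (1, 1 ± √(1+1/β)); (1 ± √(1+1/β), 1); or (½(1−1/β), ½(1−1/β)). -/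
noncomputable section

private lemma sq_eq_aux {x s : ℝ} (h : x ^ 2 = s ^ 2) : x = s ∨ x = -s := by
  have h' : (x - s) * (x + s) = 0 := by linear_combination h
  rcases mul_eq_zero.1 h' with h'' | h''
  · left; linarith
  · right; linarith

set_option maxHeartbeats 1000000 in
/-- completeness of the fixed-point list of system (7) for `β > 0`. -/
theorem stmt19 (β : ℝ) (hβ : 0 < β) (m2 m3 : ℝ) :
    IsFixedPoint7 β m2 m3 ↔
      (m2, m3) = (0, 0) ∨ (m2, m3) = (0, 1) ∨ (m2, m3) = (0, -1) ∨
      (m2, m3) = (1, 0) ∨ (m2, m3) = (-1, 0) ∨ (m2, m3) = (1, 1) ∨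
      (m2, m3) = (0, 1 + Real.sqrt (1 / β)) ∨ (m2, m3) = (0, 1 - Real.sqrt (1 / β)) ∨
      (m2, m3) = (1 + Real.sqrt (1 / β), 0) ∨ (m2, m3) = (1 - Real.sqrt (1 / β), 0) ∨
      (m2, m3) = (1, 1 + Real.sqrt (1 + 1 / β)) ∨
      (m2, m3) = (1, 1 - Real.sqrt (1 + 1 / β)) ∨
      (m2, m3) = (1 + Real.sqrt (1 + 1 / β), 1) ∨
      (m2, m3) = (1 - Real.sqrt (1 + 1 / β), 1) ∨
      (m2, m3) = ((1 - 1 / β) / 2, (1 - 1 / β) / 2) := by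
  have hβ0 : β ≠ 0 := hβ.ne'
  set s1 := Real.sqrt (1 / β) with hs1def
  set s2 := Real.sqrt (1 + 1 / β) with hs2def
  have hs1 : s1 ^ 2 = 1 / β := Real.sq_sqrt (by positivity)
  have hs2 : s2 ^ 2 = 1 + 1 / β := Real.sq_sqrt (by positivity)
  have hbs1 : β * s1 ^ 2 = 1 := by rw [hs1]; field_simp
  have hbs2 : β * s2 ^ 2 = β + 1 := by
    rw [hs2]; field_simp
  have hinv : β * (1 / β) = 1 := by field_simp
  constructor
  · rintro ⟨h2, h3⟩
    unfold G2 at h2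
    unfold G3 at h3
    simp only [Prod.mk.injEq]
    rcases mul_eq_zero.1 h2 with h2' | h2d
    · rcases mul_eq_zero.1 h2' with h2'' | h2c
      · rcases mul_eq_zero.1 h2'' with h2a | h2b
        · -- m2 = 0
          rcases mul_eq_zero.1 h3 with h3' | h3d
          · rcases mul_eq_zero.1 h3' with h3'' | h3c
            · rcases mul_eq_zero.1 h3'' with h3a | h3b
              · exact Or.inl ⟨h2a, h3a⟩
              · refine Or.inr (Or.inl ⟨?_, ?_⟩) <;> linarith
            · refine Or.inr (Or.inr (Or.inl ⟨?_, ?_⟩)) <;> linarith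
          · -- β(1-m3)^2 = 1
            have key : β * (1 - m3) ^ 2 = β * s1 ^ 2 := by
              rw [hbs1]; linear_combination -h3d + β * m2 * h2a
            rcases sq_eq_aux (mul_left_cancel₀ hβ0 key) with hk | hk
            · refine Or.inr (Or.inr (Or.inr (Or.inr (Or.inr (Or.inr (Or.inr (Or.inl
                ⟨?_, ?_⟩))))))) <;> linarith
            · refine Or.inr (Or.inr (Or.inr (Or.inr (Or.inr (Or.inr (Or.inl
                ⟨?_, ?_⟩)))))) <;> linarith
        · -- m2 = 1
          have e2 : m2 = 1 := by linarith
          rcases mul_eq_zero.1 h3 with h3' | h3d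
          · rcases mul_eq_zero.1 h3' with h3'' | h3c
            · rcases mul_eq_zero.1 h3'' with h3a | h3b
              · refine Or.inr (Or.inr (Or.inr (Or.inl ⟨?_, ?_⟩))) <;> linarith
              · refine Or.inr (Or.inr (Or.inr (Or.inr (Or.inr (Or.inl
                  ⟨?_, ?_⟩))))) <;> linarith
            · refine Or.inr (Or.inr (Or.inr (Or.inl ⟨?_, ?_⟩))) <;> linarith
          · -- β(m3-1)^2 = β+1
            have key : β * (m3 - 1) ^ 2 = β * s2 ^ 2 := by
              rw [hbs2]; linear_combination -h3d + β * (m2 + 1) * e2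
            rcases sq_eq_aux (mul_left_cancel₀ hβ0 key) with hk | hk
            · refine Or.inr (Or.inr (Or.inr (Or.inr (Or.inr (Or.inr (Or.inr (Or.inr
                (Or.inr (Or.inr (Or.inl ⟨?_, ?_⟩)))))))))) <;> linarith
            · refine Or.inr (Or.inr (Or.inr (Or.inr (Or.inr (Or.inr (Or.inr (Or.inr
                (Or.inr (Or.inr (Or.inr (Or.inl ⟨?_, ?_⟩))))))))))) <;> linarith
      · -- 1 + m2 - m3 = 0
        rcases mul_eq_zero.1 h3 with h3' | h3d
        · rcases mul_eq_zero.1 h3' with h3'' | h3c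
          · rcases mul_eq_zero.1 h3'' with h3a | h3b
            · refine Or.inr (Or.inr (Or.inr (Or.inr (Or.inl ⟨?_, ?_⟩)))) <;> linarith
            · refine Or.inr (Or.inl ⟨?_, ?_⟩) <;> linarith
          · exfalso; linarith
        · exfalso
          have : (1 : ℝ) = 0 := by
            linear_combination h3d + β * (1 - m2 - m3) * h2c
          exact one_ne_zero this
    · -- last factor of G2 vanishes
      rcases mul_eq_zero.1 h3 with h3' | h3d
      · rcases mul_eq_zero.1 h3' with h3'' | h3c
        · rcases mul_eq_zero.1 h3'' with h3a | h3b
          · -- m3 = 0 : β(1-m2)^2 = 1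
            have key : β * (1 - m2) ^ 2 = β * s1 ^ 2 := by
              rw [hbs1]; linear_combination -h2d + β * m3 * h3a
            rcases sq_eq_aux (mul_left_cancel₀ hβ0 key) with hk | hk
            · refine Or.inr (Or.inr (Or.inr (Or.inr (Or.inr (Or.inr (Or.inr (Or.inr
                (Or.inr (Or.inl ⟨?_, ?_⟩))))))))) <;> linarith
            · refine Or.inr (Or.inr (Or.inr (Or.inr (Or.inr (Or.inr (Or.inr (Or.inr
                (Or.inl ⟨?_, ?_⟩)))))))) <;> linarith
          · -- m3 = 1 : β(m2-1)^2 = β+1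
            have e3 : m3 = 1 := by linarith
            have key : β * (m2 - 1) ^ 2 = β * s2 ^ 2 := by
              rw [hbs2]; linear_combination -h2d + β * (m3 + 1) * e3
            rcases sq_eq_aux (mul_left_cancel₀ hβ0 key) with hk | hk
            · refine Or.inr (Or.inr (Or.inr (Or.inr (Or.inr (Or.inr (Or.inr (Or.inr
                (Or.inr (Or.inr (Or.inr (Or.inr (Or.inl ⟨?_, ?_⟩)))))))))))) <;> linarith
            · refine Or.inr (Or.inr (Or.inr (Or.inr (Or.inr (Or.inr (Or.inr (Or.inr
                (Or.inr (Or.inr (Or.inr (Or.inr (Or.inr (Or.inl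
                ⟨?_, ?_⟩))))))))))))) <;> linarith
        · exfalso
          have : (1 : ℝ) = 0 := by
            linear_combination h2d + β * (1 - m2 - m3) * h3c
          exact one_ne_zero this
      · -- both last factors vanish
        have key : β * ((1 - m2 - m3) * (2 * (m2 - m3))) = 0 := by
          linear_combination h2d - h3d
        rcases mul_eq_zero.1 ((mul_eq_zero.1 key).resolve_left hβ0) with hk | hk
        · exfalso
          have : (1 : ℝ) = 0 := by
            linear_combination h2d + β * (1 + m3 - m2) * hk
          exact one_ne_zero this
        · have e2 : 2 * (β * m2) = β - 1 := by
            linear_combination h2d + (β * (m2 + m3) / 2) * hk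
          have e2' : m2 = (1 - 1 / β) / 2 := by
            field_simp
            linear_combination e2
          have em : m3 = m2 := by linarith
          have e3' : m3 = (1 - 1 / β) / 2 := by rw [em]; exact e2'
          iterate 14 right
          exact ⟨e2', e3'⟩
  · intro h
    simp only [Prod.mk.injEq] at h
    obtain ⟨rfl, rfl⟩ | ⟨rfl, rfl⟩ | ⟨rfl, rfl⟩ | ⟨rfl, rfl⟩ | ⟨rfl, rfl⟩ | ⟨rfl, rfl⟩ |
      ⟨rfl, rfl⟩ | ⟨rfl, rfl⟩ | ⟨rfl, rfl⟩ | ⟨rfl, rfl⟩ | ⟨rfl, rfl⟩ | ⟨rfl, rfl⟩ |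
      ⟨rfl, rfl⟩ | ⟨rfl, rfl⟩ | ⟨rfl, rfl⟩ := h
    · exact ⟨by norm_num [G2], by norm_num [G3]⟩
    · exact ⟨by norm_num [G2], by norm_num [G3]⟩
    · exact ⟨by norm_num [G2], by norm_num [G3]⟩
    · exact ⟨by norm_num [G2], by norm_num [G3]⟩
    · exact ⟨by norm_num [G2], by norm_num [G3]⟩
    · exact ⟨by norm_num [G2], by norm_num [G3]⟩
    · exact ⟨by norm_num [G2], by unfold G3; linear_combination (s1 * (1 + s1) * (2 + s1)) * hbs1⟩
    · exact ⟨by norm_num [G2], by unfold G3; linear_combination (-((1 - s1) * s1 * (2 - s1))) * hbs1⟩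
    · exact ⟨by unfold G2; linear_combination (s1 * (1 + s1) * (2 + s1)) * hbs1, by norm_num [G3]⟩
    · exact ⟨by unfold G2; linear_combination (-((1 - s1) * s1 * (2 - s1))) * hbs1, by norm_num [G3]⟩
    · exact ⟨by norm_num [G2], by unfold G3; linear_combination (s2 * (1 + s2) ^ 2) * hbs2⟩
    · exact ⟨by norm_num [G2], by unfold G3; linear_combination (-((1 - s2) ^ 2 * s2)) * hbs2⟩
    · exact ⟨by unfold G2; linear_combination (s2 * (1 + s2) ^ 2) * hbs2, by norm_num [G3]⟩
    · exact ⟨by unfold G2; linear_combination (-((1 - s2) ^ 2 * s2)) * hbs2, by norm_num [G3]⟩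
    · constructor
      · unfold G2
        linear_combination (-(((1 - 1 / β) / 2) * (1 - (1 - 1 / β) / 2))) * hinv
      · unfold G3
        linear_combination (-(((1 - 1 / β) / 2) * (1 - (1 - 1 / β) / 2))) * hinv
end
end
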